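/- Let S be a Cu-semigroup and let a ∈ S. Then the following are equivalent: (1) for all m, n ∈ ℕ one has m·a ≤ n·a if and only if m ≤ n, and furthermore there exist l, L ∈ ℕ and x ∈ S such that x ≪ l·a and (k·L)·x ≤ k·a fails for every k ≥ 1; (2) there exists a functional λ on S with λ(a) = 1. -/

import Mathlib

open scoped ENNReal

/-- The (sequential) way-below relation: `a ≪ b` if for every increasing
sequence `f` with a supremum `s` such that `b ≤ s`, some `f n` dominates `a`. -/
def CuWayBelow {S : Type*} [Preorder S] (a b : S) : Prop :=
  ∀ f : ℕ → S, Monotone f → ∀ s : S, IsLUB (Set.range f) s → b ≤ s → ∃ n : ℕ, a ≤ f n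

/-- An abstract Cu-semigroup: a positively ordered monoid satisfying the
axioms (O1)-(O4). -/
structure IsCuSemigroup (S : Type*) [AddCommMonoid S] [PartialOrder S] : Prop where
  /-- addition is order-preserving -/
  add_le_add : ∀ a b c : S, a ≤ b → a + c ≤ b + c
  /-- `0` is the least element -/
  zero_le : ∀ a : S, 0 ≤ a
  /-- (O1) every increasing sequence has a supremum -/
  O1 : ∀ f : ℕ → S, Monotone f → ∃ s : S, IsLUB (Set.range f) s
  /-- (O2) every element is the supremum of a rapidly increasing sequence -/
  O2 : ∀ a : S, ∃ f : ℕ → S, (∀ n : ℕ, CuWayBelow (f n) (f (n + 1))) ∧ IsLUB (Set.range f) a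
  /-- (O3) way-below is additive -/
  O3 : ∀ a' a b' b : S, CuWayBelow a' a → CuWayBelow b' b → CuWayBelow (a' + b') (a + b)
  /-- (O4) suprema of increasing sequences are additive -/
  O4 : ∀ f g : ℕ → S, Monotone f → Monotone g → ∀ s t : S, IsLUB (Set.range f) s →
    IsLUB (Set.range g) t → IsLUB (Set.range (fun n => f n + g n)) (s + t)

/-- A functional on a Cu-semigroup: an additive, order-preserving map to
`[0,∞]` preserving `0` and suprema of increasing sequences. -/
structure IsCuFunctional {S : Type*} [AddCommMonoid S] [PartialOrder S] (l : S → ℝ≥0∞) : Prop where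
  map_zero : l 0 = 0
  map_add : ∀ a b : S, l (a + b) = l a + l b
  mono : ∀ a b : S, a ≤ b → l a ≤ l b
  map_lub : ∀ f : ℕ → S, Monotone f → ∀ s : S, IsLUB (Set.range f) s → l s = ⨆ n : ℕ, l (f n)

section Gr
variable (M : Type*) [AddCommMonoid M]

def grSetoid : Setoid (M × M) where
  r p q := ∃ c, p.1 + q.2 + c = q.1 + p.2 + c
  iseqv := by
    constructor
    · intro p; exact ⟨0, rfl⟩
    · rintro p q ⟨c, h⟩; exact ⟨c, h.symm⟩
    · rintro p q r ⟨c, h⟩ ⟨d, h'⟩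
      refine ⟨q.1 + q.2 + c + d, ?_⟩
      have e1 : p.1 + r.2 + (q.1 + q.2 + c + d) = (p.1 + q.2 + c) + (q.1 + r.2 + d) := by abel
      rw [e1, h, h']; abel

def Gr := Quotient (grSetoid M)

variable {M}

def Gr.mk (s t : M) : Gr M := Quotient.mk (grSetoid M) (s, t)

lemma Gr.mk_eq_mk {s t s' t' : M} : Gr.mk s t = Gr.mk s' t' ↔ ∃ c, s + t' + c = s' + t + c := by
  constructor
  · intro h; exact Quotient.exact h
  · intro h; exact Quotient.sound h

instance : Add (Gr M) :=
  ⟨Quotient.map₂ (fun p q => (p.1 + q.1, p.2 + q.2)) (by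
    rintro p p' ⟨c, h⟩ q q' ⟨d, h'⟩
    refine ⟨c + d, ?_⟩
    have e1 : p.1 + q.1 + (p'.2 + q'.2) + (c + d) = (p.1 + p'.2 + c) + (q.1 + q'.2 + d) := by abel
    rw [e1, h, h']; dsimp only; abel)⟩

instance : Zero (Gr M) := ⟨Gr.mk 0 0⟩

instance : Neg (Gr M) :=
  ⟨Quotient.map (fun p => (p.2, p.1)) (by
    rintro p q ⟨c, h⟩
    refine ⟨c, ?_⟩
    have e1 : p.2 + q.1 + c = q.1 + p.2 + c := by abel
    rw [e1, ← h]; abel)⟩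

noncomputable instance : AddCommGroup (Gr M) where
  add := (· + ·)
  zero := 0
  neg := Neg.neg
  nsmul := nsmulRec
  zsmul := zsmulRec
  add_assoc := by
    rintro ⟨p⟩ ⟨q⟩ ⟨r⟩
    exact Quotient.sound ⟨0, by dsimp only; abel⟩
  zero_add := by rintro ⟨p⟩; exact Quotient.sound ⟨0, by dsimp only; abel⟩
  add_zero := by rintro ⟨p⟩; exact Quotient.sound ⟨0, by dsimp only; abel⟩
  add_comm := by rintro ⟨p⟩ ⟨q⟩; exact Quotient.sound ⟨0, by dsimp only; abel⟩
  neg_add_cancel := by rintro ⟨p⟩; exact Quotient.sound ⟨p.1 + p.2, by dsimp only; abel⟩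

lemma Gr.mk_add_mk (s t s' t' : M) : Gr.mk s t + Gr.mk s' t' = Gr.mk (s + s') (t + t') := rfl

lemma Gr.neg_mk (s t : M) : -Gr.mk s t = Gr.mk t s := rfl

lemma Gr.zero_def : (0 : Gr M) = Gr.mk 0 0 := rfl

lemma Gr.sub_mk (s t s' t' : M) : Gr.mk s t - Gr.mk s' t' = Gr.mk (s + t') (t + s') := by
  rw [sub_eq_add_neg, Gr.neg_mk, Gr.mk_add_mk]

lemma Gr.nsmul_mk (n : ℕ) (s t : M) : n • Gr.mk s t = Gr.mk (n • s) (n • t) := by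
  induction n with
  | zero => simp [Gr.zero_def]
  | succ k ih => rw [succ_nsmul, ih, Gr.mk_add_mk, succ_nsmul, succ_nsmul]

lemma Gr.ind (P : Gr M → Prop) (h : ∀ s t, P (Gr.mk s t)) : ∀ g, P g := by
  rintro ⟨p⟩; exact h p.1 p.2

end Gr


section HB
variable {G : Type*} [AddCommGroup G]

/-- A "good" set is the graph of a partial additive functional dominated by `p`,
containing the prescribed value at `x0`. -/
def HBGood (p : G → ℝ) (x0 : G) (Γ : Set (G × ℝ)) : Prop :=
  (0, (0:ℝ)) ∈ Γ ∧ (∀ u ∈ Γ, ∀ v ∈ Γ, u + v ∈ Γ) ∧ (∀ u ∈ Γ, -u ∈ Γ) ∧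
    (∀ u ∈ Γ, u.2 ≤ p u.1) ∧ (x0, p x0) ∈ Γ

theorem hahn_banach_group (p : G → ℝ)
    (hadd : ∀ g h, p (g + h) ≤ p g + p h)
    (hhom : ∀ (n : ℕ) (g : G), p ((n + 1) • g) = (n + 1) * p g)
    (hpos : ∀ g : G, 0 ≤ p g + p (-g))
    (x0 : G) :
    ∃ f : G → ℝ, (∀ g h, f (g + h) = f g + f h) ∧ (∀ g, f g ≤ p g) ∧ f x0 = p x0 := by
  have p0 : p 0 = 0 := by
    have h2 := hhom 1 0
    simp only [smul_zero] at h2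
    norm_num at h2
    linarith
  have pneg : ∀ g, -p (-g) ≤ p g := fun g => by have := hpos g; linarith
  have phom : ∀ (n : ℕ), 0 < n → ∀ g, p (n • g) = n * p g := by
    intro n hn g
    obtain ⟨k, rfl⟩ := Nat.exists_eq_add_of_lt hn
    simpa [add_comm] using hhom k g
  -- smul closure for good sets
  have good_nsmul : ∀ Γ, HBGood p x0 Γ → ∀ u ∈ Γ, ∀ n : ℕ, (n • u.1, n * u.2) ∈ Γ := by
    intro Γ hΓ u hu n
    induction n with
    | zero => simpa using hΓ.1
    | succ k ih =>
      have := hΓ.2.1 _ ih u hu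
      convert this using 1; ext <;> simp [succ_nsmul, add_mul]
  -- Zorn's lemma
  set 𝒮 : Set (Set (G × ℝ)) := {Γ | HBGood p x0 Γ}
  have hΓ0 : (Set.range (fun z : ℤ => (z • x0, z * p x0))) ∈ 𝒮 := by
    refine ⟨⟨0, by simp⟩, ?_, ?_, ?_, ⟨1, by simp⟩⟩
    · rintro u ⟨z, rfl⟩ v ⟨w, rfl⟩
      exact ⟨z + w, by simp [add_smul, add_mul, Prod.ext_iff]⟩
    · rintro u ⟨z, rfl⟩
      exact ⟨-z, by simp [Prod.ext_iff]⟩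
    · rintro u ⟨z, rfl⟩
      rcases le_or_gt 0 z with hz | hz
      · lift z to ℕ using hz
        rcases Nat.eq_zero_or_pos z with rfl | hzpos
        · simp [p0]
        · simp only [natCast_zsmul, Int.cast_natCast]
          rw [phom z hzpos x0]
      · have hz' : 0 < -z := by omega
        lift -z to ℕ using le_of_lt hz' with n hn
        have hzeq : z = -(n : ℤ) := by omega
        subst hzeq
        simp only [neg_smul, natCast_zsmul, Int.cast_neg, Int.cast_natCast]
        have hnpos : 0 < n := by exact_mod_cast hz'
        have h1 : -p (-(n • x0)) ≤ p (n • x0) := pneg _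
        have h2 : p (n • x0) = n * p x0 := phom n hnpos x0
        have h3 : -(n * p x0) ≤ p (-(n • x0)) := by
          have := pneg (-(n • x0)); rw [neg_neg] at this; linarith
        linarith [h3]
  obtain ⟨Γ, -, hΓgood, hΓmax⟩ := zorn_subset_nonempty 𝒮 (by
    intro c hc hchain hcne
    refine ⟨⋃₀ c, ?_, fun s hs => Set.subset_sUnion_of_mem hs⟩
    obtain ⟨Γ1, hΓ1⟩ := hcne
    have hg1 := hc hΓ1
    refine ⟨Set.mem_sUnion.2 ⟨Γ1, hΓ1, hg1.1⟩, ?_, ?_, ?_, Set.mem_sUnion.2 ⟨Γ1, hΓ1, hg1.2.2.2.2⟩⟩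
    · rintro u ⟨s, hs, hus⟩ v ⟨t, ht, hvt⟩
      rcases hchain.total hs ht with h | h
      · exact ⟨t, ht, (hc ht).2.1 _ (h hus) _ hvt⟩
      · exact ⟨s, hs, (hc hs).2.1 _ hus _ (h hvt)⟩
    · rintro u ⟨s, hs, hus⟩
      exact ⟨s, hs, (hc hs).2.2.1 _ hus⟩
    · rintro u ⟨s, hs, hus⟩
      exact (hc hs).2.2.2.1 _ hus) _ hΓ0
  -- single-valuedness
  have hsv : ∀ g r r', (g, r) ∈ Γ → (g, r') ∈ Γ → r = r' := by
    intro g r r' h1 h2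
    have h3 := hΓgood.2.1 _ h1 _ (hΓgood.2.2.1 _ h2)
    have h4 : ((0 : G), r - r') ∈ Γ := by
      simpa [sub_eq_add_neg] using h3
    have h5 : r - r' ≤ p 0 := hΓgood.2.2.2.1 _ h4
    have h6 : -(r - r') ≤ p (-(0:G)) := hΓgood.2.2.2.1 _ (hΓgood.2.2.1 _ h4)
    rw [p0] at h5
    rw [neg_zero, p0] at h6
    linarith
  -- totality via the extension step
  have htot : ∀ b : G, ∃ r, (b, r) ∈ Γ := by
    intro b
    by_contra hb
    push_neg at hb
    -- the extension value
    set A : Set ℝ := {t | ∃ u ∈ Γ, ∃ n : ℕ, t = (p (u.1 + (n + 1) • b) - u.2) / (n + 1)} with hA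
    have hAne : A.Nonempty := ⟨_, ⟨(0,0), hΓgood.1, 0, rfl⟩⟩
    -- cross inequality
    have hcross : ∀ u ∈ Γ, ∀ n2 : ℕ, ∀ t ∈ A,
        (u.2 - p (u.1 - (n2 + 1) • b)) / (n2 + 1) ≤ t := by
      rintro u hu n2 t ⟨v, hv, n1, rfl⟩
      rw [div_le_div_iff₀ (by positivity) (by positivity)]
      have key : ((n2:ℝ) + 1) * v.2 + ((n1:ℝ) + 1) * u.2 ≤
          ((n2:ℝ) + 1) * p (v.1 + (n1 + 1) • b) + ((n1:ℝ) + 1) * p (u.1 - (n2 + 1) • b) := by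
        have hmem : ((n2 + 1) • v.1 + (n1 + 1) • u.1,
            ((n2:ℝ) + 1) * v.2 + ((n1:ℝ) + 1) * u.2) ∈ Γ := by
          have h1 := good_nsmul Γ hΓgood v hv (n2 + 1)
          have h2 := good_nsmul Γ hΓgood u hu (n1 + 1)
          have := hΓgood.2.1 _ h1 _ h2
          simpa [Prod.ext_iff] using this
        have hdom := hΓgood.2.2.2.1 _ hmem
        simp only at hdom
        have heq : (n2 + 1) • v.1 + (n1 + 1) • u.1 =
            (n2 + 1) • (v.1 + (n1 + 1) • b) + (n1 + 1) • (u.1 - (n2 + 1) • b) := by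
          rw [smul_add, smul_sub, smul_smul, smul_smul, Nat.mul_comm]
          abel
        rw [heq] at hdom
        calc ((n2:ℝ) + 1) * v.2 + ((n1:ℝ) + 1) * u.2
            ≤ p ((n2 + 1) • (v.1 + (n1 + 1) • b) + (n1 + 1) • (u.1 - (n2 + 1) • b)) := by
              exact_mod_cast hdom
          _ ≤ p ((n2 + 1) • (v.1 + (n1 + 1) • b)) + p ((n1 + 1) • (u.1 - (n2 + 1) • b)) :=
              hadd _ _
          _ = ((n2:ℝ) + 1) * p (v.1 + (n1 + 1) • b) + ((n1:ℝ) + 1) * p (u.1 - (n2 + 1) • b) := by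
              rw [hhom n2, hhom n1]
      nlinarith [key]
    have hAbdd : BddBelow A := by
      refine ⟨(0 - p ((0:G) - (0 + 1) • b)) / (0 + 1), ?_⟩
      intro t ht
      have := hcross (0, 0) hΓgood.1 0 t ht
      simpa using this
    set α := sInf A with hα
    -- the two constraint families
    have hC1 : ∀ u ∈ Γ, ∀ n : ℕ, u.2 + ((n:ℝ) + 1) * α ≤ p (u.1 + (n + 1) • b) := by
      intro u hu n
      have h1 : α ≤ (p (u.1 + (n + 1) • b) - u.2) / (n + 1) :=
        csInf_le hAbdd ⟨u, hu, n, rfl⟩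
      have h2 : ((n:ℝ) + 1) > 0 := by positivity
      rw [le_div_iff₀ h2] at h1
      linarith
    have hC2 : ∀ u ∈ Γ, ∀ n : ℕ, u.2 - ((n:ℝ) + 1) * α ≤ p (u.1 - (n + 1) • b) := by
      intro u hu n
      have h1 : (u.2 - p (u.1 - (n + 1) • b)) / (n + 1) ≤ α :=
        le_csInf hAne (hcross u hu n)
      have h2 : ((n:ℝ) + 1) > 0 := by positivity
      rw [div_le_iff₀ h2] at h1
      linarith
    -- the extended good set
    set Γ' : Set (G × ℝ) := {w | ∃ u ∈ Γ, ∃ z : ℤ, w = (u.1 + z • b, u.2 + z * α)} with hΓ'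
    have hsub : Γ ⊆ Γ' := fun u hu => ⟨u, hu, 0, by simp⟩
    have hΓ'good : HBGood p x0 Γ' := by
      refine ⟨hsub hΓgood.1, ?_, ?_, ?_, hsub hΓgood.2.2.2.2⟩
      · rintro u ⟨v, hv, z, rfl⟩ u' ⟨v', hv', z', rfl⟩
        exact ⟨v + v', hΓgood.2.1 _ hv _ hv', z + z', by
          simp [Prod.ext_iff, add_smul, add_mul]; constructor <;> [abel; ring]⟩
      · rintro u ⟨v, hv, z, rfl⟩
        exact ⟨-v, hΓgood.2.2.1 _ hv, -z, by simp [Prod.ext_iff]; constructor <;> [abel; ring]⟩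
      · rintro u ⟨v, hv, z, rfl⟩
        simp only
        rcases lt_trichotomy z 0 with hz | rfl | hz
        · obtain ⟨n, hn⟩ : ∃ n : ℕ, z = -((n:ℤ) + 1) := ⟨(-z - 1).toNat, by omega⟩
          subst hn
          have h2 := hC2 v hv n
          have heq : v.1 + (-((n:ℤ)+1)) • b = v.1 - (n + 1) • b := by
            rw [neg_smul, ← sub_eq_add_neg]
            norm_cast
          rw [heq]
          have h3 : ((↑(-((n:ℤ)+1))) : ℝ) * α = -(((n:ℝ)+1) * α) := by push_cast; ring
          rw [h3]
          linarith
        · simpa using hΓgood.2.2.2.1 _ hv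
        · obtain ⟨n, hn⟩ : ∃ n : ℕ, z = (n:ℤ) + 1 := ⟨(z - 1).toNat, by omega⟩
          subst hn
          have heq : v.1 + (((n:ℤ)+1)) • b = v.1 + (n + 1) • b := by norm_cast
          rw [heq]
          have h3 : ((↑(((n:ℤ)+1))) : ℝ) * α = ((n:ℝ)+1) * α := by push_cast; ring
          rw [h3]
          exact hC1 v hv n
    exact hb α (hΓmax hΓ'good hsub ⟨(0,0), hΓgood.1, 1, by simp⟩)
  -- extract the function
  choose f hf using htot
  refine ⟨f, ?_, ?_, ?_⟩
  · intro g h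
    have := hΓgood.2.1 _ (hf g) _ (hf h)
    exact (hsv _ _ _ (hf (g + h)) this)
  · intro g
    exact hΓgood.2.2.2.1 _ (hf g)
  · exact hsv _ _ _ (hf x0) hΓgood.2.2.2.2

end HB

section CuBasic
variable {S : Type*} [AddCommMonoid S] [PartialOrder S] (hS : IsCuSemigroup S)

lemma Cu.add_le_add' {a b c d : S} (hS : IsCuSemigroup S) (h1 : a ≤ b) (h2 : c ≤ d) :
    a + c ≤ b + d := by
  refine le_trans (hS.add_le_add _ _ _ h1) ?_
  rw [add_comm b c, add_comm b d]
  exact hS.add_le_add _ _ _ h2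

lemma Cu.le_add_right (hS : IsCuSemigroup S) (a b : S) : a ≤ a + b := by
  have := hS.add_le_add 0 b a (hS.zero_le b)
  rwa [zero_add, add_comm] at this

lemma Cu.nsmul_le_nsmul (hS : IsCuSemigroup S) {a b : S} (h : a ≤ b) (n : ℕ) :
    n • a ≤ n • b := by
  induction n with
  | zero => simp
  | succ k ih => rw [succ_nsmul, succ_nsmul]; exact Cu.add_le_add' hS ih h

lemma Cu.nsmul_le_nsmul_of_le (hS : IsCuSemigroup S) (a : S) {m n : ℕ} (h : m ≤ n) :
    m • a ≤ n • a := by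
  obtain ⟨k, rfl⟩ := Nat.exists_eq_add_of_le h
  rw [add_nsmul]
  exact Cu.le_add_right hS _ _

lemma CuWayBelow.le {a b : S} (h : CuWayBelow a b) : a ≤ b := by
  obtain ⟨n, hn⟩ := h (fun _ => b) monotone_const b (by
    rw [Set.range_const]; exact isLUB_singleton) le_rfl
  exact hn

lemma CuWayBelow.trans_le {a b c : S} (h : CuWayBelow a b) (h2 : b ≤ c) : CuWayBelow a c :=
  fun f hf s hs hcs => h f hf s hs (h2.trans hcs)

lemma CuWayBelow.le_trans' {a b c : S} (h : a ≤ b) (h2 : CuWayBelow b c) : CuWayBelow a c :=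
  fun f hf s hs hcs => (h2 f hf s hs hcs).imp (fun n hn => h.trans hn)

lemma CuWayBelow.zero (hS : IsCuSemigroup S) (b : S) : CuWayBelow (0 : S) b :=
  fun f _ _ _ _ => ⟨0, hS.zero_le _⟩

/-- rapidly increasing sequences from O2 are monotone -/
lemma Cu.O2mono {f : ℕ → S} (h : ∀ n, CuWayBelow (f n) (f (n + 1))) : Monotone f :=
  monotone_nat_of_le_succ (fun n => (h n).le)

end CuBasic

section Lam
variable {S : Type*} [AddCommMonoid S] [PartialOrder S]

/-- The lower-semicontinuous regularization of a monotone additive map. -/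
noncomputable def lamReg (d : S → ℝ≥0∞) (b : S) : ℝ≥0∞ :=
  ⨆ c : {c : S // CuWayBelow c b}, d c.1

lemma lamReg_le_d (d : S → ℝ≥0∞) (hdmono : ∀ s t : S, s ≤ t → d s ≤ d t) (b : S) :
    lamReg d b ≤ d b := by
  refine iSup_le fun c => hdmono _ _ c.2.le

lemma lamReg_mono (d : S → ℝ≥0∞) {b b' : S} (h : b ≤ b') : lamReg d b ≤ lamReg d b' := by
  refine iSup_le fun c => ?_
  exact le_iSup_of_le (i := ⟨c.1, c.2.trans_le h⟩) le_rfl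

lemma d_le_lamReg (d : S → ℝ≥0∞) {c b : S} (h : CuWayBelow c b) : d c ≤ lamReg d b :=
  le_iSup_of_le (i := ⟨c, h⟩) le_rfl

/-- For an O2-sequence of `b`, `lamReg d b` is computed as the sup along the sequence. -/
lemma lamReg_eq_iSup (d : S → ℝ≥0∞) (hdmono : ∀ s t : S, s ≤ t → d s ≤ d t) {b : S} {f : ℕ → S} (hf : ∀ n, CuWayBelow (f n) (f (n + 1)))
    (hlub : IsLUB (Set.range f) b) : lamReg d b = ⨆ n, d (f n) := by
  apply le_antisymm
  · refine iSup_le fun c => ?_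
    obtain ⟨n, hn⟩ := c.2 f (Cu.O2mono hf) b hlub le_rfl
    exact le_iSup_of_le n (hdmono _ _ hn)
  · refine iSup_le fun n => ?_
    have : CuWayBelow (f n) b := (hf n).trans_le (hlub.1 ⟨n + 1, rfl⟩)
    exact d_le_lamReg d this

lemma lamReg_add (hS : IsCuSemigroup S) (d : S → ℝ≥0∞)
    (hdadd : ∀ s t, d (s + t) = d s + d t)
    (hdmono : ∀ s t : S, s ≤ t → d s ≤ d t) (b c : S) : lamReg d (b + c) = lamReg d b + lamReg d c := by
  obtain ⟨f, hf, hflub⟩ := hS.O2 b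
  obtain ⟨g, hg, hglub⟩ := hS.O2 c
  have hsum : ∀ n, CuWayBelow ((fun n => f n + g n) n) ((fun n => f n + g n) (n + 1)) :=
    fun n => hS.O3 _ _ _ _ (hf n) (hg n)
  have hsumlub : IsLUB (Set.range (fun n => f n + g n)) (b + c) :=
    hS.O4 f g (Cu.O2mono hf) (Cu.O2mono hg) b c hflub hglub
  rw [lamReg_eq_iSup d hdmono hsum hsumlub, lamReg_eq_iSup d hdmono hf hflub,
    lamReg_eq_iSup d hdmono hg hglub]
  have : ∀ n, d (f n + g n) = d (f n) + d (g n) := fun n => hdadd _ _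
  simp_rw [this]
  exact (ENNReal.iSup_add_iSup_of_monotone
    (fun i j hij => hdmono _ _ (Cu.O2mono hf hij))
    (fun i j hij => hdmono _ _ (Cu.O2mono hg hij))).symm

lemma lamReg_zero (d : S → ℝ≥0∞) (hd0 : d 0 = 0)
    (hdmono : ∀ s t : S, s ≤ t → d s ≤ d t) : lamReg d 0 = 0 := by
  have := lamReg_le_d d hdmono (0 : S)
  rw [hd0] at this
  exact le_antisymm this zero_le

lemma lamReg_lub (hS : IsCuSemigroup S) (d : S → ℝ≥0∞)
    (hdmono : ∀ s t : S, s ≤ t → d s ≤ d t) {s : S} {g : ℕ → S} (hg : Monotone g) (hlub : IsLUB (Set.range g) s) :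
    lamReg d s = ⨆ m, lamReg d (g m) := by
  apply le_antisymm
  · obtain ⟨f, hf, hflub⟩ := hS.O2 s
    rw [lamReg_eq_iSup d hdmono hf hflub]
    refine iSup_le fun n => ?_
    have h1 : CuWayBelow (f (n + 1)) s := (hf (n + 1)).trans_le (hflub.1 ⟨n + 2, rfl⟩)
    obtain ⟨m, hm⟩ := h1 g hg s hlub le_rfl
    have h2 : CuWayBelow (f n) (g m) := (hf n).trans_le hm
    exact le_iSup_of_le m (d_le_lamReg d h2)
  · exact iSup_le fun m => lamReg_mono d (hlub.1 ⟨m, rfl⟩)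

lemma lamReg_nsmul (hS : IsCuSemigroup S) (d : S → ℝ≥0∞) (hd0 : d 0 = 0)
    (hdadd : ∀ s t, d (s + t) = d s + d t)
    (hdmono : ∀ s t : S, s ≤ t → d s ≤ d t) (b : S) (n : ℕ) : lamReg d (n • b) = n * lamReg d b := by
  induction n with
  | zero => simp [lamReg_zero d hd0 hdmono]
  | succ k ih =>
    rw [succ_nsmul, lamReg_add hS d hdadd hdmono, ih]
    push_cast
    ring

end Lam

section Core
variable {S : Type*} [AddCommMonoid S] [PartialOrder S]

/-- The submonoid of elements dominated by a multiple of `a`. -/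
def Sa (hS : IsCuSemigroup S) (a : S) : AddSubmonoid S where
  carrier := {s | ∃ n : ℕ, s ≤ n • a}
  zero_mem' := ⟨0, by simp⟩
  add_mem' := by
    rintro s t ⟨n, hn⟩ ⟨m, hm⟩
    exact ⟨n + m, by rw [add_nsmul]; exact Cu.add_le_add' hS hn hm⟩

variable (hS : IsCuSemigroup S) (a : S)

abbrev CuM := ↥(Sa hS a)

lemma CuM.coe_nsmul (n : ℕ) (s : CuM hS a) : ((n • s : CuM hS a) : S) = n • (s : S) :=
  map_nsmul (Sa hS a).subtype n s

def aM : CuM hS a := ⟨a, 1, by simpa using le_rfl⟩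

def CuU : Gr (CuM hS a) := Gr.mk (aM hS a) 0

def CuP : Set (Gr (CuM hS a)) :=
  {g | ∃ s t : CuM hS a, (s : S) ≤ (t : S) ∧ g = Gr.mk t s}

/-- membership in the cone, in terms of elements of `S`. -/
lemma mem_CuP {s t : CuM hS a} :
    Gr.mk t s ∈ CuP hS a ↔ ∃ e : CuM hS a, (s : S) + (e : S) ≤ (t : S) + (e : S) := by
  constructor
  · rintro ⟨s', t', hst, heq⟩
    obtain ⟨c, hc⟩ := Gr.mk_eq_mk.1 heq
    -- hc : t + s' + c = t' + s + c  (in CuM)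
    refine ⟨s' + c, ?_⟩
    have hc' : (t : S) + s' + c = (t' : S) + s + c := by
      exact_mod_cast congrArg (fun z : CuM hS a => (z : S)) hc
    push_cast
    have h2 : ((s:S) + ↑c) + ↑s' ≤ ((s:S) + ↑c) + ↑t' := Cu.add_le_add' hS le_rfl hst
    calc (s:S) + (↑s' + ↑c) = ((s:S) + ↑c) + ↑s' := by abel
      _ ≤ ((s:S) + ↑c) + ↑t' := h2
      _ = (↑t' : S) + ↑s + ↑c := by abel
      _ = (↑t : S) + ↑s' + ↑c := hc'.symm
      _ = (↑t : S) + (↑s' + ↑c) := by abel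
  · rintro ⟨e, he⟩
    refine ⟨s + e, t + e, by push_cast; exact he, ?_⟩
    rw [Gr.mk_eq_mk]
    exact ⟨0, by abel⟩

lemma CuP_zero : (0 : Gr (CuM hS a)) ∈ CuP hS a := by
  rw [Gr.zero_def, mem_CuP]
  exact ⟨0, le_rfl⟩

lemma CuP_add {g h : Gr (CuM hS a)} (hg : g ∈ CuP hS a) (hh : h ∈ CuP hS a) :
    g + h ∈ CuP hS a := by
  obtain ⟨s, t, hst, rfl⟩ := hg
  obtain ⟨s', t', hst', rfl⟩ := hh
  rw [Gr.mk_add_mk]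
  exact ⟨s + s', t + t', by push_cast; exact Cu.add_le_add' hS hst hst', rfl⟩

lemma CuP_nsmul {g : Gr (CuM hS a)} (hg : g ∈ CuP hS a) (n : ℕ) : n • g ∈ CuP hS a := by
  induction n with
  | zero => simpa using CuP_zero hS a
  | succ k ih => rw [succ_nsmul]; exact CuP_add hS a ih hg

def CuLe (g h : Gr (CuM hS a)) : Prop := h - g ∈ CuP hS a

lemma CuLe_refl (g : Gr (CuM hS a)) : CuLe hS a g g := by
  unfold CuLe; rw [sub_self]; exact CuP_zero hS a

lemma CuLe_add {g h g' h' : Gr (CuM hS a)} (h1 : CuLe hS a g h) (h2 : CuLe hS a g' h') :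
    CuLe hS a (g + g') (h + h') := by
  unfold CuLe at *
  have := CuP_add hS a h1 h2
  have heq : h - g + (h' - g') = h + h' - (g + g') := by abel
  rwa [heq] at this

lemma CuLe_trans {g h k : Gr (CuM hS a)} (h1 : CuLe hS a g h) (h2 : CuLe hS a h k) :
    CuLe hS a g k := by
  unfold CuLe at *
  have := CuP_add hS a h1 h2
  have heq : h - g + (k - h) = k - g := by abel
  rwa [heq] at this

lemma CuLe_nsmul {g h : Gr (CuM hS a)} (h1 : CuLe hS a g h) (n : ℕ) :
    CuLe hS a (n • g) (n • h) := by
  unfold CuLe at *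
  have := CuP_nsmul hS a h1 n
  rwa [smul_sub] at this

/-- nonnegative multiples of the unit are in the cone -/
lemma CuP_nsmul_U (k : ℕ) : ((k : ℤ) • CuU hS a) ∈ CuP hS a := by
  rw [natCast_zsmul]
  exact CuP_nsmul hS a (by
    rw [CuU, mem_CuP]; exact ⟨0, by simpa using hS.zero_le _⟩) k

/-- the unit is an order unit -/
lemma CuLe_unit (g : Gr (CuM hS a)) : ∃ N : ℕ, CuLe hS a g ((N : ℤ) • CuU hS a) := by
  obtain ⟨⟨s, t⟩, rfl⟩ : ∃ p : CuM hS a × CuM hS a, Gr.mk p.1 p.2 = g :=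
    ⟨Quotient.out g, by rw [Gr.mk]; exact Quotient.out_eq g⟩
  obtain ⟨N, hN⟩ := s.2
  refine ⟨N, ?_⟩
  unfold CuLe
  rw [natCast_zsmul, CuU, Gr.nsmul_mk, smul_zero, Gr.sub_mk, mem_CuP]
  refine ⟨0, ?_⟩
  push_cast [CuM.coe_nsmul]
  simp only [add_zero, zero_add]
  calc (s : S) ≤ N • a := hN
    _ = N • ((aM hS a : S)) := rfl
    _ ≤ N • ((aM hS a : S)) + (t : S) := Cu.le_add_right hS _ _
end Core

section CoreQ
variable {S : Type*} [AddCommMonoid S] [PartialOrder S] (hS : IsCuSemigroup S) (a : S)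

lemma mem_Sa {s : S} : s ∈ Sa hS a ↔ ∃ n : ℕ, s ≤ n • a := Iff.rfl

def CuQSet (g : Gr (CuM hS a)) : Set ℝ :=
  {r | ∃ (m : ℤ) (n : ℕ), 0 < n ∧ CuLe hS a (n • g) (m • CuU hS a) ∧ r = (m : ℝ) / (n : ℝ)}

noncomputable def CuQ (g : Gr (CuM hS a)) : ℝ := sInf (CuQSet hS a g)

lemma add_le_add_left' (hS : IsCuSemigroup S) {u v : S} (w : S) (h : u ≤ v) : w + u ≤ w + v := by
  rw [add_comm w u, add_comm w v]; exact hS.add_le_add _ _ _ h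

lemma iter_ineq (hS : IsCuSemigroup S) {u v e : S} (h : u + e ≤ v + e) : ∀ k : ℕ, 0 < k → k • u + e ≤ k • v + e := by
  intro k hk
  induction k with
  | zero => omega
  | succ j ih =>
    rcases Nat.eq_zero_or_pos j with rfl | hj
    · simpa using h
    · have h1 := ih hj
      calc (j + 1) • u + e = j • u + (u + e) := by rw [succ_nsmul]; abel
        _ ≤ j • u + (v + e) := add_le_add_left' hS _ h
        _ = v + (j • u + e) := by abel
        _ ≤ v + (j • v + e) := add_le_add_left' hS _ h1
        _ = (j + 1) • v + e := by rw [succ_nsmul]; abel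

lemma no_neg_unit (H1 : ∀ m n : ℕ, m • a ≤ n • a ↔ m ≤ n) (j : ℕ) (hj : 0 < j) :
    Gr.mk (0 : CuM hS a) (j • aM hS a) ∉ CuP hS a := by
  rw [mem_CuP]
  rintro ⟨e, he⟩
  push_cast [CuM.coe_nsmul] at he
  have he' : j • a + (e : S) ≤ 0 + (e : S) := by
    rw [zero_add]
    calc j • a + (e : S) = j • (aM hS a : S) + (e : S) := rfl
      _ ≤ (e : S) := by simpa using he
  obtain ⟨N, hN⟩ := e.2
  have key : ∀ k : ℕ, 0 < k → k * j ≤ N := by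
    intro k hk
    have h2 := iter_ineq hS he' k hk
    rw [smul_zero, zero_add] at h2
    have h3 : (k * j) • a ≤ N • a := by
      calc (k * j) • a = k • (j • a) := by rw [smul_smul]
        _ ≤ k • (j • a) + (e : S) := Cu.le_add_right hS _ _
        _ ≤ (e : S) := h2
        _ ≤ N • a := hN
    exact (H1 _ _).1 h3
  have := key (N + 1) (by omega)
  nlinarith

lemma CuLe_U_nonneg (H1 : ∀ m n : ℕ, m • a ≤ n • a ↔ m ≤ n) {m : ℤ}
    (h : CuLe hS a 0 (m • CuU hS a)) : 0 ≤ m := by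
  by_contra hm
  push_neg at hm
  obtain ⟨j, hj⟩ : ∃ j : ℕ, m = -(j : ℤ) := ⟨(-m).toNat, by omega⟩
  have hjpos : 0 < j := by omega
  subst hj
  unfold CuLe at h
  rw [sub_zero, neg_smul, natCast_zsmul, CuU, Gr.nsmul_mk, smul_zero, Gr.neg_mk] at h
  exact no_neg_unit hS a H1 j hjpos h

lemma CuQSet_nonempty (g : Gr (CuM hS a)) : (CuQSet hS a g).Nonempty := by
  obtain ⟨N, hN⟩ := CuLe_unit hS a g
  exact ⟨(N : ℝ) / (1 : ℕ), ⟨N, 1, one_pos, by simpa using hN, rfl⟩⟩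

lemma CuLe_smul_comm (g : Gr (CuM hS a)) (k : ℕ) (m : ℤ) {n : ℕ}
    (h : CuLe hS a (n • g) (m • CuU hS a)) :
    CuLe hS a ((k * n) • g) (((k : ℤ) * m) • CuU hS a) := by
  have := CuLe_nsmul hS a h k
  rwa [smul_smul, ← natCast_zsmul (m • CuU hS a) k, smul_smul] at this

lemma CuQSet_cross (H1 : ∀ m n : ℕ, m • a ≤ n • a ↔ m ≤ n) {g : Gr (CuM hS a)} {r r' : ℝ}
    (h : r ∈ CuQSet hS a g) (h' : r' ∈ CuQSet hS a (-g)) : 0 ≤ r + r' := by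
  obtain ⟨m, n, hn, hle, rfl⟩ := h
  obtain ⟨m', n', hn', hle', rfl⟩ := h'
  have A := CuLe_smul_comm hS a g n' m hle
  have B := CuLe_smul_comm hS a (-g) n m' hle'
  have C := CuLe_add hS a A B
  have hzero : (n' * n) • g + (n * n') • (-g) = 0 := by
    rw [smul_neg, Nat.mul_comm n n']
    exact add_neg_cancel _
  have hU : ((n' : ℤ) * m) • CuU hS a + ((n : ℤ) * m') • CuU hS a
      = (((n' : ℤ) * m + (n : ℤ) * m')) • CuU hS a := (add_zsmul _ _ _).symm
  rw [hzero, hU] at C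
  have hint : (0 : ℤ) ≤ (n' : ℤ) * m + (n : ℤ) * m' := CuLe_U_nonneg hS a H1 C
  have hreal : (0 : ℝ) ≤ (n' : ℝ) * m + (n : ℝ) * m' := by exact_mod_cast hint
  have hn0 : (0 : ℝ) < n := by exact_mod_cast hn
  have hn'0 : (0 : ℝ) < n' := by exact_mod_cast hn'
  have heq : (m : ℝ) / n + (m' : ℝ) / n' = ((n' : ℝ) * m + (n : ℝ) * m') / (n * n') := by
    field_simp
  rw [heq]
  positivity

lemma CuQSet_bdd (H1 : ∀ m n : ℕ, m • a ≤ n • a ↔ m ≤ n) (g : Gr (CuM hS a)) :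
    BddBelow (CuQSet hS a g) := by
  obtain ⟨r', hr'⟩ := CuQSet_nonempty hS a (-g)
  exact ⟨-r', fun r hr => by have := CuQSet_cross hS a H1 hr hr'; linarith⟩

lemma CuQ_npos (H1 : ∀ m n : ℕ, m • a ≤ n • a ↔ m ≤ n) (g : Gr (CuM hS a)) :
    0 ≤ CuQ hS a g + CuQ hS a (-g) := by
  have h1 : -CuQ hS a (-g) ≤ CuQ hS a g := by
    refine le_csInf (CuQSet_nonempty hS a g) fun r hr => ?_
    have h2 : -r ≤ CuQ hS a (-g) := by
      refine le_csInf (CuQSet_nonempty hS a (-g)) fun r' hr' => ?_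
      have := CuQSet_cross hS a H1 hr hr'
      linarith
    linarith
  linarith

lemma CuQ_subadd (H1 : ∀ m n : ℕ, m • a ≤ n • a ↔ m ≤ n) (g h : Gr (CuM hS a)) :
    CuQ hS a (g + h) ≤ CuQ hS a g + CuQ hS a h := by
  have key : ∀ r ∈ CuQSet hS a g, ∀ r' ∈ CuQSet hS a h, CuQ hS a (g + h) ≤ r + r' := by
    rintro r ⟨m, n, hn, hle, rfl⟩ r' ⟨m', n', hn', hle', rfl⟩
    have A := CuLe_smul_comm hS a g n' m hle
    have B := CuLe_smul_comm hS a h n m' hle'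
    have C := CuLe_add hS a A B
    have hzero : (n' * n) • g + (n * n') • h = (n * n') • (g + h) := by
      rw [smul_add, Nat.mul_comm n n']
    have hU : ((n' : ℤ) * m) • CuU hS a + ((n : ℤ) * m') • CuU hS a
        = (((n' : ℤ) * m + (n : ℤ) * m')) • CuU hS a := (add_zsmul _ _ _).symm
    rw [hzero, hU] at C
    have hmem : ((((n' : ℤ) * m + (n : ℤ) * m') : ℤ) : ℝ) / ((n * n' : ℕ) : ℝ)
        ∈ CuQSet hS a (g + h) := ⟨_, n * n', by positivity, C, rfl⟩
    have h1 := csInf_le (CuQSet_bdd hS a H1 _) hmem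
    have hn0 : (0 : ℝ) < n := by exact_mod_cast hn
    have hn'0 : (0 : ℝ) < n' := by exact_mod_cast hn'
    have heq : ((((n' : ℤ) * m + (n : ℤ) * m') : ℤ) : ℝ) / ((n * n' : ℕ) : ℝ)
        = (m : ℝ) / n + (m' : ℝ) / n' := by
      push_cast
      field_simp
    rw [heq] at h1
    exact h1
  have step : ∀ r ∈ CuQSet hS a g, CuQ hS a (g + h) - r ≤ CuQ hS a h := by
    intro r hr
    refine le_csInf (CuQSet_nonempty hS a h) fun r' hr' => ?_
    have := key r hr r' hr'
    linarith
  have step2 : CuQ hS a (g + h) - CuQ hS a h ≤ CuQ hS a g := by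
    refine le_csInf (CuQSet_nonempty hS a g) fun r hr => ?_
    have := step r hr
    linarith
  linarith

lemma CuQ_hom (H1 : ∀ m n : ℕ, m • a ≤ n • a ↔ m ≤ n) (n : ℕ) (g : Gr (CuM hS a)) :
    CuQ hS a ((n + 1) • g) = ((n : ℝ) + 1) * CuQ hS a g := by
  set k := n + 1 with hk
  have hkpos : 0 < k := by omega
  have hk0 : (0 : ℝ) < k := by exact_mod_cast hkpos
  apply le_antisymm
  · have step : ∀ r ∈ CuQSet hS a g, CuQ hS a (k • g) / k ≤ r := by
      rintro r ⟨m, n0, hn0, hle, rfl⟩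
      have A := CuLe_smul_comm hS a g k m hle
      rw [Nat.mul_comm k n0, ← smul_smul] at A
      have hmem : (((k : ℤ) * m : ℤ) : ℝ) / (n0 : ℝ) ∈ CuQSet hS a (k • g) :=
        ⟨(k : ℤ) * m, n0, hn0, A, rfl⟩
      have h1 := csInf_le (CuQSet_bdd hS a H1 _) hmem
      rw [div_le_iff₀ hk0]
      have hn00 : (0 : ℝ) < n0 := by exact_mod_cast hn0
      calc CuQ hS a (k • g) ≤ (((k : ℤ) * m : ℤ) : ℝ) / (n0 : ℝ) := h1
        _ = (m : ℝ) / n0 * k := by push_cast; field_simp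
    have h2 : CuQ hS a (k • g) / k ≤ CuQ hS a g := le_csInf (CuQSet_nonempty hS a g) step
    rw [div_le_iff₀ hk0] at h2
    calc CuQ hS a (k • g) ≤ CuQ hS a g * k := h2
      _ = ((n : ℝ) + 1) * CuQ hS a g := by rw [hk]; push_cast; ring
  · have step : ∀ r ∈ CuQSet hS a (k • g), ((n : ℝ) + 1) * CuQ hS a g ≤ r := by
      rintro r ⟨m, n0, hn0, hle, rfl⟩
      rw [smul_smul] at hle
      have hmem : ((m : ℤ) : ℝ) / ((n0 * k : ℕ) : ℝ) ∈ CuQSet hS a g :=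
        ⟨m, n0 * k, by positivity, hle, rfl⟩
      have h1 := csInf_le (CuQSet_bdd hS a H1 _) hmem
      have hn00 : (0 : ℝ) < n0 := by exact_mod_cast hn0
      have h2 : ((n : ℝ) + 1) * CuQ hS a g ≤ ((n : ℝ) + 1) * ((m : ℝ) / ((n0 * k : ℕ) : ℝ)) := by
        have := mul_le_mul_of_nonneg_left h1 (le_of_lt (by positivity : (0:ℝ) < (n:ℝ) + 1))
        exact this
      calc ((n : ℝ) + 1) * CuQ hS a g ≤ ((n : ℝ) + 1) * ((m : ℝ) / ((n0 * k : ℕ) : ℝ)) := h2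
        _ = (m : ℝ) / n0 := by
            rw [hk]; push_cast; field_simp
    exact le_csInf (CuQSet_nonempty hS a _) step

lemma CuQ_U_le_one (H1 : ∀ m n : ℕ, m • a ≤ n • a ↔ m ≤ n) : CuQ hS a (CuU hS a) ≤ 1 := by
  have hmem : ((1 : ℤ) : ℝ) / ((1 : ℕ) : ℝ) ∈ CuQSet hS a (CuU hS a) :=
    ⟨1, 1, one_pos, by simpa using CuLe_refl hS a (CuU hS a), rfl⟩
  have := csInf_le (CuQSet_bdd hS a H1 _) hmem
  simpa [CuQ] using this

lemma CuQ_neg_cone (H1 : ∀ m n : ℕ, m • a ≤ n • a ↔ m ≤ n) {q : Gr (CuM hS a)}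
    (hq : q ∈ CuP hS a) : CuQ hS a (-q) ≤ 0 := by
  have hle : CuLe hS a ((1 : ℕ) • (-q)) ((0 : ℤ) • CuU hS a) := by
    unfold CuLe
    rw [one_nsmul, zero_zsmul, zero_sub, neg_neg]
    exact hq
  have hmem : ((0 : ℤ) : ℝ) / ((1 : ℕ) : ℝ) ∈ CuQSet hS a (-q) := ⟨0, 1, one_pos, hle, rfl⟩
  have := csInf_le (CuQSet_bdd hS a H1 _) hmem
  simpa [CuQ] using this

end CoreQ

section CoreState
variable {S : Type*} [AddCommMonoid S] [PartialOrder S] (hS : IsCuSemigroup S) (a : S)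

lemma CuQ_xi_ge (H1 : ∀ m n : ℕ, m • a ≤ n • a ↔ m ≤ n) (x : S) (l L : ℕ)
    (hL1 : 0 < L) (hx : x ≤ l • a)
    (hL : ∀ k : ℕ, 1 ≤ k → ¬ (k * L) • x ≤ k • a) :
    1 / (L : ℝ) ≤ CuQ hS a (Gr.mk (⟨x, l, hx⟩ : CuM hS a) 0) := by
  set Ξ : Gr (CuM hS a) := Gr.mk (⟨x, l, hx⟩ : CuM hS a) 0 with hΞ
  refine le_csInf (CuQSet_nonempty hS a Ξ) ?_
  rintro r ⟨m, n, hn, hle, rfl⟩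
  have claim : (n : ℤ) ≤ (L : ℤ) * m := by
    by_contra hcon
    push_neg at hcon
    set M0 : ℕ := m.toNat with hM0
    have hLM0 : L * M0 + 1 ≤ n := by
      have h1 : (L : ℤ) * (M0 : ℤ) < (n : ℤ) := by
        rcases le_or_gt m 0 with hm | hm
        · have : (M0 : ℤ) = 0 := by simp [hM0]; omega
          rw [this]; simpa using (by exact_mod_cast hn : (0:ℤ) < n)
        · have : (M0 : ℤ) = m := by simp [hM0]; omega
          rw [this]; exact hcon
      have : L * M0 < n := by exact_mod_cast h1
      omega
    have hstep : CuLe hS a (n • Ξ) (((M0 : ℕ) : ℤ) • CuU hS a) := by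
      refine CuLe_trans hS a hle ?_
      unfold CuLe
      have heq : ((M0 : ℤ)) • CuU hS a - m • CuU hS a = (((M0 : ℤ) - m)) • CuU hS a :=
        (sub_zsmul _ _ _).symm
      rw [heq, ← Int.toNat_of_nonneg (show (0:ℤ) ≤ (M0:ℤ) - m by omega)]
      exact CuP_nsmul_U hS a _
    unfold CuLe at hstep
    rw [natCast_zsmul, hΞ, CuU, Gr.nsmul_mk, Gr.nsmul_mk, smul_zero, smul_zero, Gr.sub_mk,
      mem_CuP] at hstep
    obtain ⟨e, he⟩ := hstep
    push_cast [CuM.coe_nsmul] at he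
    have he' : n • x + (e : S) ≤ M0 • a + (e : S) := by
      have h2 : ((n • (⟨x, l, hx⟩ : CuM hS a) : CuM hS a) : S) = n • x := by
        rw [CuM.coe_nsmul]
      have h3 : ((M0 • aM hS a : CuM hS a) : S) = M0 • a := by
        rw [CuM.coe_nsmul]; rfl
      simpa [h2, h3, aM] using he
    obtain ⟨N, hN⟩ := e.2
    set k : ℕ := L * N + 1 with hk
    have hkpos : 0 < k := by omega
    have hiter := iter_ineq hS he' k hkpos
    have h3 : ((k * n) • x : S) ≤ (k * M0 + N) • a := by
      calc (k * n) • x = k • (n • x) := by rw [smul_smul]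
        _ ≤ k • (n • x) + (e : S) := Cu.le_add_right hS _ _
        _ ≤ k • (M0 • a) + (e : S) := hiter
        _ ≤ k • (M0 • a) + N • a := add_le_add_left' hS _ hN
        _ = (k * M0) • a + N • a := by rw [smul_smul]
        _ = (k * M0 + N) • a := by rw [add_nsmul]
    have hnat : L * (k * M0 + N) ≤ k * n := by nlinarith
    have h4 : ((k * n) * L) • x ≤ (k * n) • a := by
      calc ((k * n) * L) • x = L • ((k * n) • x) := by rw [smul_smul, Nat.mul_comm]
        _ ≤ L • ((k * M0 + N) • a) := Cu.nsmul_le_nsmul hS h3 L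
        _ = (L * (k * M0 + N)) • a := by rw [smul_smul]
        _ ≤ (k * n) • a := Cu.nsmul_le_nsmul_of_le hS a hnat
    have hkn : 1 ≤ k * n := by
      have := Nat.mul_pos hkpos hn; omega
    exact hL (k * n) hkn h4
  have hm1 : (1 : ℤ) ≤ m := by
    have hn1 : (1 : ℤ) ≤ (n : ℤ) := by exact_mod_cast hn
    nlinarith [claim]
  have hL0 : (0 : ℝ) < L := by exact_mod_cast hL1
  have hn0 : (0 : ℝ) < n := by exact_mod_cast hn
  rw [div_le_div_iff₀ hL0 hn0]
  have : (n : ℝ) ≤ (m : ℝ) * L := by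
    have : ((n : ℤ) : ℝ) ≤ (((L : ℤ) * m : ℤ) : ℝ) := by exact_mod_cast claim
    push_cast at this
    linarith
  linarith

theorem exists_good_state (hS : IsCuSemigroup S) (x : S) (l L : ℕ)
    (H1 : ∀ m n : ℕ, m • a ≤ n • a ↔ m ≤ n)
    (hL1 : 0 < L) (hx : x ≤ l • a)
    (hL : ∀ k : ℕ, 1 ≤ k → ¬ (k * L) • x ≤ k • a) :
    ∃ d : S → ℝ≥0∞, d 0 = 0 ∧ (∀ s t, d (s + t) = d s + d t) ∧
      (∀ s t : S, s ≤ t → d s ≤ d t) ∧ d a ≤ 1 ∧ ENNReal.ofReal (1 / (L : ℝ)) ≤ d x := by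
  classical
  obtain ⟨f, fadd, fle, fxi⟩ := hahn_banach_group (CuQ hS a)
    (CuQ_subadd hS a H1) (CuQ_hom hS a H1) (CuQ_npos hS a H1)
    (Gr.mk (⟨x, l, hx⟩ : CuM hS a) 0)
  have f0 : f 0 = 0 := by have := fadd 0 0; simp only [add_zero] at this; linarith
  have fneg : ∀ g, f (-g) = -f g := by
    intro g
    have := fadd g (-g)
    rw [add_neg_cancel, f0] at this
    linarith
  have fP : ∀ q ∈ CuP hS a, 0 ≤ f q := by
    intro q hq
    have h1 := fle (-q)
    have h2 := CuQ_neg_cone hS a H1 hq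
    rw [fneg] at h1
    linarith
  have fsub : ∀ g h, f (g - h) = f g - f h := by
    intro g h
    have := fadd (g - h) h
    rw [sub_add_cancel] at this
    linarith
  -- the state
  refine ⟨fun s => if h : ∃ n : ℕ, s ≤ n • a then
      ENNReal.ofReal (f (Gr.mk (⟨s, h⟩ : CuM hS a) 0)) else ⊤, ?_, ?_, ?_, ?_, ?_⟩
  · -- zero
    beta_reduce
    have h0 : ∃ n : ℕ, (0 : S) ≤ n • a := ⟨0, by simp⟩
    rw [dif_pos h0]
    have : Gr.mk (⟨(0:S), h0⟩ : CuM hS a) 0 = 0 := by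
      rw [Gr.zero_def]
      congr 1
    rw [this, f0]
    simp
  · -- additivity
    intro s t
    beta_reduce
    by_cases hs : ∃ n : ℕ, s ≤ n • a
    · by_cases ht : ∃ n : ℕ, t ≤ n • a
      · have hst : ∃ n : ℕ, s + t ≤ n • a := by
          obtain ⟨n, hn⟩ := hs; obtain ⟨m, hm⟩ := ht
          exact ⟨n + m, by rw [add_nsmul]; exact Cu.add_le_add' hS hn hm⟩
        rw [dif_pos hs, dif_pos ht, dif_pos hst]
        have heq : Gr.mk (⟨s + t, hst⟩ : CuM hS a) 0 =
            Gr.mk (⟨s, hs⟩ : CuM hS a) 0 + Gr.mk (⟨t, ht⟩ : CuM hS a) 0 := by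
          rw [Gr.mk_add_mk, Gr.mk_eq_mk]
          exact ⟨0, Subtype.ext (by push_cast; abel)⟩
        rw [heq, fadd]
        rw [ENNReal.ofReal_add (by
            have : Gr.mk (⟨s, hs⟩ : CuM hS a) 0 ∈ CuP hS a := by
              rw [mem_CuP]; exact ⟨0, by simpa using hS.zero_le _⟩
            exact fP _ this) (by
            have : Gr.mk (⟨t, ht⟩ : CuM hS a) 0 ∈ CuP hS a := by
              rw [mem_CuP]; exact ⟨0, by simpa using hS.zero_le _⟩
            exact fP _ this)]
      · have hst : ¬ ∃ n : ℕ, s + t ≤ n • a := by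
          rintro ⟨n, hn⟩
          refine ht ⟨n, le_trans ?_ hn⟩
          rw [add_comm]
          exact Cu.le_add_right hS t s
        rw [dif_neg ht, dif_neg hst]
        simp
    · have hst : ¬ ∃ n : ℕ, s + t ≤ n • a := by
        rintro ⟨n, hn⟩
        exact hs ⟨n, le_trans (Cu.le_add_right hS s t) hn⟩
      rw [dif_neg hs, dif_neg hst]
      simp
  · -- monotone
    intro s t hstle
    beta_reduce
    by_cases ht : ∃ n : ℕ, t ≤ n • a
    · have hs : ∃ n : ℕ, s ≤ n • a := by
        obtain ⟨n, hn⟩ := ht; exact ⟨n, le_trans hstle hn⟩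
      rw [dif_pos hs, dif_pos ht]
      apply ENNReal.ofReal_le_ofReal
      have hdiff : Gr.mk (⟨t, ht⟩ : CuM hS a) 0 - Gr.mk (⟨s, hs⟩ : CuM hS a) 0 ∈ CuP hS a := by
        rw [Gr.sub_mk, mem_CuP]
        refine ⟨0, ?_⟩
        push_cast
        simpa using hstle
      have := fP _ hdiff
      rw [fsub] at this
      linarith
    · rw [dif_neg ht]
      exact le_top
  · -- value at a
    beta_reduce
    have ha : ∃ n : ℕ, a ≤ n • a := ⟨1, by simp⟩
    rw [dif_pos ha]
    have heq : Gr.mk (⟨a, ha⟩ : CuM hS a) 0 = CuU hS a := by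
      rw [CuU]; congr 1
    rw [heq]
    rw [ENNReal.ofReal_le_one]
    exact le_trans (fle _) (CuQ_U_le_one hS a H1)
  · -- value at x
    beta_reduce
    have hxx : ∃ n : ℕ, x ≤ n • a := ⟨l, hx⟩
    rw [dif_pos hxx]
    apply ENNReal.ofReal_le_ofReal
    have heq : Gr.mk (⟨x, hxx⟩ : CuM hS a) 0 = Gr.mk (⟨x, l, hx⟩ : CuM hS a) 0 := by
      congr 1
    rw [heq, fxi]
    exact CuQ_xi_ge hS a H1 x l L hL1 hx hL

end CoreState

/-- Let `S` be a Cu-semigroup and `a ∈ S`.  The following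
are equivalent:
(1) `m•a ≤ n•a` iff `m ≤ n`, and there exist `l L ∈ ℕ` and `x ∈ S` with
`x ≪ l•a` and `(k*L)•x ≤ k•a` failing for every `k ≥ 1`;
(2) there is a functional `λ` on `S` with `λ a = 1`. -/
theorem stmt10 {S : Type*} [AddCommMonoid S] [PartialOrder S]
    (hS : IsCuSemigroup S) (a : S) :
    ((∀ m n : ℕ, m • a ≤ n • a ↔ m ≤ n) ∧
      ∃ (l L : ℕ) (x : S), CuWayBelow x (l • a) ∧
        ∀ k : ℕ, 1 ≤ k → ¬ (k * L) • x ≤ k • a)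
    ↔ (∃ lam : S → ℝ≥0∞, IsCuFunctional lam ∧ lam a = 1) := by
  constructor
  · rintro ⟨H1, l, L, x, hwb, hL⟩
    have hL1 : 0 < L := by
      by_contra h
      push_neg at h
      have hL0 : L = 0 := by omega
      subst hL0
      exact hL 1 le_rfl (by simpa using hS.zero_le a)
    have hx : x ≤ l • a := hwb.le
    obtain ⟨d, hd0, hdadd, hdmono', hda, hdx⟩ :=
      exists_good_state (a := a) (hS := hS) x l L H1 hL1 hx hL
    have hla_le : lamReg d a ≤ 1 := le_trans (lamReg_le_d d hdmono' a) hda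
    have hne_top : lamReg d a ≠ ⊤ := ne_top_of_le_ne_top ENNReal.one_ne_top hla_le
    have hpos : lamReg d a ≠ 0 := by
      intro h0
      have h1 : d x ≤ lamReg d (l • a) := d_le_lamReg d hwb
      have h2 : lamReg d (l • a) = l * lamReg d a := lamReg_nsmul hS d hd0 hdadd hdmono' a l
      rw [h2, h0, mul_zero] at h1
      have h3 : (0 : ℝ≥0∞) < ENNReal.ofReal (1 / (L : ℝ)) := by
        rw [ENNReal.ofReal_pos]
        have : (0:ℝ) < L := by exact_mod_cast hL1
        positivity
      have h4 := le_trans hdx h1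
      rw [le_zero_iff] at h4
      exact h3.ne' h4
    refine ⟨fun b => lamReg d b / lamReg d a, ⟨?_, ?_, ?_, ?_⟩, ?_⟩
    · beta_reduce
      rw [lamReg_zero d hd0 hdmono', ENNReal.zero_div]
    · intro b c
      beta_reduce
      rw [lamReg_add hS d hdadd hdmono', ENNReal.add_div]
    · intro b c h
      beta_reduce
      exact ENNReal.div_le_div_right (lamReg_mono d h) _
    · intro f hf s hs
      beta_reduce
      rw [lamReg_lub hS d hdmono' hf hs, ENNReal.iSup_div]
    · beta_reduce
      exact ENNReal.div_self hpos hne_top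
  · rintro ⟨lam, hlam, hla⟩
    have hsmul : ∀ (n : ℕ) (b : S), lam (n • b) = n * lam b := by
      intro n b
      induction n with
      | zero => simpa using hlam.map_zero
      | succ k ih =>
        rw [succ_nsmul, hlam.map_add, ih]
        push_cast
        ring
    have H1 : ∀ m n : ℕ, m • a ≤ n • a ↔ m ≤ n := by
      intro m n
      constructor
      · intro h
        have h2 := hlam.mono _ _ h
        rw [hsmul, hsmul, hla, mul_one, mul_one] at h2
        exact_mod_cast h2
      · exact fun h => Cu.nsmul_le_nsmul_of_le hS a h
    refine ⟨H1, ?_⟩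
    obtain ⟨f, hf, hflub⟩ := hS.O2 a
    have hmono := Cu.O2mono hf
    have h1 : lam a = ⨆ n, lam (f n) := hlam.map_lub f hmono a hflub
    have h2 : (1/2 : ℝ≥0∞) < ⨆ n, lam (f n) := by
      rw [← h1, hla]
      norm_num
    obtain ⟨n, hn⟩ := lt_iSup_iff.mp h2
    refine ⟨1, 2, f n, ?_, ?_⟩
    · rw [one_nsmul]
      exact (hf n).trans_le (hflub.1 ⟨n + 1, rfl⟩)
    · intro k hk hcon
      have h3 := hlam.mono _ _ hcon
      rw [hsmul, hsmul, hla, mul_one] at h3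
      have hk0 : ((k * 2 : ℕ) : ℝ≥0∞) ≠ 0 := by
        simp only [ne_eq, Nat.cast_eq_zero]
        omega
      have hktop : ((k * 2 : ℕ) : ℝ≥0∞) ≠ ⊤ := ENNReal.natCast_ne_top _
      have h5 : ((k * 2 : ℕ) : ℝ≥0∞) * (1/2) < ((k * 2 : ℕ) : ℝ≥0∞) * lam (f n) :=
        ENNReal.mul_lt_mul_right hk0 hktop hn
      have h6 : ((k * 2 : ℕ) : ℝ≥0∞) * (1/2) = (k : ℝ≥0∞) := by
        push_cast
        rw [one_div, mul_assoc, ENNReal.mul_inv_cancel two_ne_zero ENNReal.ofNat_ne_top, mul_one]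
      rw [h6] at h5
      exact absurd h3 (not_le.mpr h5)
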